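/- Let E be a nonnegative random variable with E[E] ≤ 1, E^a a nonnegative random variable, U ~ Uniform(0,1) independent of (E^a, E), and h : [0,∞) → [0,1] a measurable control function. Suppose a, b : [0,∞) → [0,∞) satisfy sup_x a(x)(1 - h(x)) ≤ β and sup_x b(x)h(x) ≤ 1 - β for some β ∈ [0,1]. Define E^active = a(E^a) if U ≥ h(E^a) and E^active = b(E^a)·E if U < h(E^a). Then E[E^active] ≤ 1. -/

import Mathlib

open MeasureTheory Set ProbabilityTheory

/-- Sufficiency of the β-decomposition for validity of the active e-value. -/
theorem active_evalue_valid
    {Ω : Type*} [MeasurableSpace Ω] (μ : Measure Ω) [IsProbabilityMeasure μ]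
    (E Ea U : Ω → ℝ) (hEm : Measurable E) (hEam : Measurable Ea) (hUm : Measurable U)
    (hEnn : ∀ ω, 0 ≤ E ω) (hEann : ∀ ω, 0 ≤ Ea ω)
    (hEint : Integrable E μ) (hEmean : ∫ ω, E ω ∂μ ≤ 1)
    (hUnif : μ.map U = volume.restrict (Icc (0:ℝ) 1))
    (hIndep : IndepFun U (fun ω => (Ea ω, E ω)) μ)
    (h a b : ℝ → ℝ) (hhm : Measurable h) (ham : Measurable a) (hbm : Measurable b)
    (hh01 : ∀ x, 0 ≤ x → h x ∈ Icc (0:ℝ) 1)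
    (hann : ∀ x, 0 ≤ x → 0 ≤ a x) (hbnn : ∀ x, 0 ≤ x → 0 ≤ b x)
    (β : ℝ) (hβ : β ∈ Icc (0:ℝ) 1)
    (hA : ∀ x, 0 ≤ x → a x * (1 - h x) ≤ β)
    (hB : ∀ x, 0 ≤ x → b x * h x ≤ 1 - β) :
    ∫ ω, (if U ω < h (Ea ω) then b (Ea ω) * E ω else a (Ea ω)) ∂μ ≤ 1 := by
  classical
  set π : Measure ℝ := volume.restrict (Icc (0:ℝ) 1) with hπ
  have hprobπ : IsProbabilityMeasure π := ⟨by simp [hπ, Real.volume_Icc]⟩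
  have hpairm : Measurable fun ω => (Ea ω, E ω) := hEam.prodMk hEm
  set ν : Measure (ℝ × ℝ) := μ.map (fun ω => (Ea ω, E ω)) with hν
  have hprobν : IsProbabilityMeasure ν := Measure.isProbabilityMeasure_map hpairm.aemeasurable
  set F : ℝ × ℝ × ℝ → ℝ := fun p => if p.1 < h p.2.1 then b p.2.1 * p.2.2 else a p.2.1 with hF
  have hFm : Measurable F := by
    apply Measurable.ite
    · exact measurableSet_lt measurable_fst (hhm.comp (measurable_fst.comp measurable_snd))
    · exact (hbm.comp (measurable_fst.comp measurable_snd)).mul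
        (measurable_snd.comp measurable_snd)
    · exact ham.comp (measurable_fst.comp measurable_snd)
  set g : Ω → ℝ × ℝ × ℝ := fun ω => (U ω, (Ea ω, E ω)) with hg
  have hgm : Measurable g := hUm.prodMk hpairm
  have hmapg : μ.map g = π.prod ν := by
    have := (indepFun_iff_map_prod_eq_prod_map_map hUm.aemeasurable
      hpairm.aemeasurable).mp hIndep
    rw [hg]
    rw [this, hUnif]
  have hfnonneg : ∀ ω, 0 ≤ F (g ω) := by
    intro ω
    by_cases hc : U ω < h (Ea ω)
    · simpa [hF, hg, hc] using mul_nonneg (hbnn _ (hEann ω)) (hEnn ω)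
    · simpa [hF, hg, hc] using hann _ (hEann ω)
  have key : (fun ω => if U ω < h (Ea ω) then b (Ea ω) * E ω else a (Ea ω))
      = fun ω => F (g ω) := rfl
  have hrw : ∫ ω, (if U ω < h (Ea ω) then b (Ea ω) * E ω else a (Ea ω)) ∂μ
      = (∫⁻ ω, ENNReal.ofReal (F (g ω)) ∂μ).toReal := by
    rw [show (fun ω => if U ω < h (Ea ω) then b (Ea ω) * E ω else a (Ea ω))
        = fun ω => F (g ω) from rfl] at *
    exact integral_eq_lintegral_of_nonneg_ae (ae_of_all _ hfnonneg)
      (hFm.comp hgm).aestronglyMeasurable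
  rw [hrw]
  have hlint : ∫⁻ ω, ENNReal.ofReal (F (g ω)) ∂μ ≤ 1 := by
    have hmap : ∫⁻ ω, ENNReal.ofReal (F (g ω)) ∂μ
        = ∫⁻ p, ENNReal.ofReal (F p) ∂(π.prod ν) := by
      rw [← hmapg, lintegral_map hFm.ennreal_ofReal hgm]
    rw [hmap, lintegral_prod_symm' _ hFm.ennreal_ofReal]
    -- ν-a.e. nonnegativity of coordinates
    have hae : ∀ᵐ q ∂ν, 0 ≤ q.1 ∧ 0 ≤ q.2 := by
      rw [hν]
      refine (ae_map_iff hpairm.aemeasurable ?_).mpr ?_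
      · exact (measurableSet_le measurable_const measurable_fst).inter
          (measurableSet_le measurable_const measurable_snd)
      · exact ae_of_all _ fun ω => ⟨hEann ω, hEnn ω⟩
    have hinner : ∀ᵐ q ∂ν, ∫⁻ u, ENNReal.ofReal (F (u, q)) ∂π
        ≤ ENNReal.ofReal ((1 - β) * q.2) + ENNReal.ofReal β := by
      filter_upwards [hae] with q hq
      obtain ⟨hx, he⟩ := hq
      set c := h q.1 with hc
      have hc01 : c ∈ Icc (0:ℝ) 1 := hh01 _ hx
      have hsplit : ∫⁻ u, ENNReal.ofReal (F (u, q)) ∂π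
          = ∫⁻ u in Iio c, ENNReal.ofReal (F (u, q)) ∂π
            + ∫⁻ u in (Iio c)ᶜ, ENNReal.ofReal (F (u, q)) ∂π :=
        (lintegral_add_compl _ measurableSet_Iio).symm
      have h1 : ∫⁻ u in Iio c, ENNReal.ofReal (F (u, q)) ∂π
          = ENNReal.ofReal (b q.1 * q.2) * π (Iio c) := by
        rw [setLIntegral_congr_fun measurableSet_Iio
          (fun u (hu : u ∈ Iio c) => by
            simp only [hF]
            rw [if_pos (show u < h q.1 from hu)])]
        rw [setLIntegral_const]
      have h2 : ∫⁻ u in (Iio c)ᶜ, ENNReal.ofReal (F (u, q)) ∂π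
          = ENNReal.ofReal (a q.1) * π (Iio c)ᶜ := by
        rw [setLIntegral_congr_fun measurableSet_Iio.compl
          (fun u (hu : u ∈ (Iio c)ᶜ) => by
            simp only [hF]
            rw [if_neg (show ¬ u < h q.1 from hu)])]
        rw [setLIntegral_const]
      have hπIio : π (Iio c) = ENNReal.ofReal c := by
        rw [hπ, Measure.restrict_apply measurableSet_Iio]
        have : Iio c ∩ Icc (0:ℝ) 1 = Ico 0 c := by
          ext u
          simp only [mem_inter_iff, mem_Iio, mem_Icc, mem_Ico]
          constructor
          · rintro ⟨h1, h2, h3⟩; exact ⟨h2, h1⟩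
          · rintro ⟨h1, h2⟩; exact ⟨h2, h1, le_trans h2.le hc01.2⟩
        rw [this, Real.volume_Ico, sub_zero]
      have hπIci : π (Iio c)ᶜ = ENNReal.ofReal (1 - c) := by
        rw [hπ, compl_Iio, Measure.restrict_apply measurableSet_Ici]
        have : Ici c ∩ Icc (0:ℝ) 1 = Icc c 1 := by
          ext u
          simp only [mem_inter_iff, mem_Ici, mem_Icc]
          constructor
          · rintro ⟨h1, h2, h3⟩; exact ⟨h1, h3⟩
          · rintro ⟨h1, h2⟩; exact ⟨h1, le_trans hc01.1 h1, h2⟩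
        rw [this, Real.volume_Icc]
      rw [hsplit, h1, h2, hπIio, hπIci]
      have e1 : ENNReal.ofReal (b q.1 * q.2) * ENNReal.ofReal c
          ≤ ENNReal.ofReal ((1 - β) * q.2) := by
        rw [← ENNReal.ofReal_mul (mul_nonneg (hbnn _ hx) he)]
        apply ENNReal.ofReal_le_ofReal
        calc b q.1 * q.2 * c = b q.1 * c * q.2 := by ring
          _ ≤ (1 - β) * q.2 := mul_le_mul_of_nonneg_right (hB _ hx) he
      have e2 : ENNReal.ofReal (a q.1) * ENNReal.ofReal (1 - c)
          ≤ ENNReal.ofReal β := by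
        rw [← ENNReal.ofReal_mul (hann _ hx)]
        exact ENNReal.ofReal_le_ofReal (hA _ hx)
      exact add_le_add e1 e2
    calc ∫⁻ q, ∫⁻ u, ENNReal.ofReal (F (u, q)) ∂π ∂ν
        ≤ ∫⁻ q, (ENNReal.ofReal ((1 - β) * q.2) + ENNReal.ofReal β) ∂ν :=
          lintegral_mono_ae hinner
      _ = ∫⁻ q, ENNReal.ofReal ((1 - β) * q.2) ∂ν + ENNReal.ofReal β := by
          rw [lintegral_add_right _ measurable_const, lintegral_const,
            measure_univ, mul_one]
      _ ≤ ENNReal.ofReal (1 - β) + ENNReal.ofReal β := by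
          gcongr
          have : ∫⁻ q, ENNReal.ofReal ((1 - β) * q.2) ∂ν
              = ∫⁻ ω, ENNReal.ofReal ((1 - β) * E ω) ∂μ := by
            rw [hν, lintegral_map (by fun_prop) hpairm]
          rw [this]
          have h1β : (0:ℝ) ≤ 1 - β := by linarith [hβ.2]
          calc ∫⁻ ω, ENNReal.ofReal ((1 - β) * E ω) ∂μ
              = ENNReal.ofReal (1 - β) * ∫⁻ ω, ENNReal.ofReal (E ω) ∂μ := by
                simp_rw [ENNReal.ofReal_mul h1β]
                rw [lintegral_const_mul _ (by fun_prop)]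
            _ = ENNReal.ofReal (1 - β) * ENNReal.ofReal (∫ ω, E ω ∂μ) := by
                rw [← ofReal_integral_eq_lintegral_ofReal hEint (ae_of_all _ hEnn)]
            _ ≤ ENNReal.ofReal (1 - β) * ENNReal.ofReal 1 :=
                mul_le_mul_right (ENNReal.ofReal_le_ofReal hEmean) _
            _ = ENNReal.ofReal (1 - β) := by simp
      _ = 1 := by
          rw [← ENNReal.ofReal_add (by linarith [hβ.2]) hβ.1]
          simp
  calc (∫⁻ ω, ENNReal.ofReal (F (g ω)) ∂μ).toReal
      ≤ (1 : ENNReal).toReal := ENNReal.toReal_mono ENNReal.one_ne_top hlint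
    _ = 1 := by simp
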